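/- If Φ is compact with respect to the sup-norm distance, then every sequence in G admits a Cauchy subsequence with respect to D_G; hence if G is complete with respect to D_G it is compact. -/

import Mathlib

open scoped ENNReal NNReal

def Fn (X : Type*) : Type _ := X → ℝ

namespace Fn
variable {X : Type*}

def mk (f : X → ℝ) : Fn X := f
def app (f : Fn X) : X → ℝ := f

@[simp] lemma app_mk (f : X → ℝ) : (mk f).app = f := rfl
@[simp] lemma mk_app (f : Fn X) : mk f.app = f := rfl

noncomputable instance : PseudoEMetricSpace (Fn X) where
  edist f g := ⨆ x, ENNReal.ofReal |f.app x - g.app x|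
  edist_self f := by simp
  edist_comm f g := by simp [abs_sub_comm]
  edist_triangle f g h := by
    refine iSup_le fun x => ?_
    calc ENNReal.ofReal |f.app x - h.app x|
        ≤ ENNReal.ofReal (|f.app x - g.app x| + |g.app x - h.app x|) :=
          ENNReal.ofReal_le_ofReal (abs_sub_le _ _ _)
      _ = ENNReal.ofReal |f.app x - g.app x| + ENNReal.ofReal |g.app x - h.app x| :=
          ENNReal.ofReal_add (abs_nonneg _) (abs_nonneg _)
      _ ≤ _ := add_le_add (le_iSup (fun x => ENNReal.ofReal |f.app x - g.app x|) x)
          (le_iSup (fun x => ENNReal.ofReal |g.app x - h.app x|) x)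

lemma edist_def (f g : Fn X) : edist f g = ⨆ x, ENNReal.ofReal |f.app x - g.app x| := rfl

lemma edist_comp (g : Equiv.Perm X) (φ ψ : X → ℝ) :
    edist (mk fun x => φ (g x)) (mk fun x => ψ (g x)) = edist (mk φ) (mk ψ) := by
  rw [edist_def, edist_def]
  exact g.surjective.iSup_comp (fun y => ENNReal.ofReal |φ y - ψ y|)

end Fn

lemma three_quarters_lt {a : ℝ≥0∞} (h0 : a ≠ 0) (ht : a ≠ ⊤) :
    a / 4 + a / 4 + a / 4 < a := by
  lift a to ℝ≥0 using ht
  rw [← ENNReal.coe_ofNat, ← ENNReal.coe_div (by norm_num), ← ENNReal.coe_add,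
    ← ENNReal.coe_add, ENNReal.coe_lt_coe, ← NNReal.coe_lt_coe]
  push_cast
  have ha : 0 < (a : ℝ) := lt_of_le_of_ne a.coe_nonneg (by simpa [eq_comm] using h0)
  linarith

/-- if `Φ` is (sequentially) compact in sup-norm, then every sequence in `G`
admits a `D_G`-Cauchy subsequence; hence if `G` is complete w.r.t. `D_G` it is
(sequentially) compact. -/
theorem stmt9 {X : Type*} [Nonempty X] (Φ : Set (X → ℝ))
    (hb : ∀ φ ∈ Φ, ∃ C : ℝ, ∀ x, |φ x| ≤ C)
    (G : Subgroup (Equiv.Perm X))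
    (hG : ∀ g ∈ G, ∀ φ ∈ Φ, (fun x => φ (g x)) ∈ Φ)
    (eD : (X → ℝ) → (X → ℝ) → ℝ≥0∞)
    (heD : ∀ φ ψ, eD φ ψ = ⨆ x, ENNReal.ofReal |φ x - ψ x|)
    (DG : Equiv.Perm X → Equiv.Perm X → ℝ≥0∞)
    (hDG : ∀ g1 g2, DG g1 g2 = ⨆ φ ∈ Φ, eD (fun x => φ (g1 x)) (fun x => φ (g2 x)))
    (hΦcomp : ∀ u : ℕ → X → ℝ, (∀ n, u n ∈ Φ) →
      ∃ ψ ∈ Φ, ∃ k : ℕ → ℕ, StrictMono k ∧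
        ∀ ε : ℝ≥0∞, 0 < ε → ∃ N, ∀ n ≥ N, eD (u (k n)) ψ < ε) :
    (∀ u : ℕ → Equiv.Perm X, (∀ n, u n ∈ G) →
      ∃ k : ℕ → ℕ, StrictMono k ∧
        ∀ ε : ℝ≥0∞, 0 < ε → ∃ N, ∀ m ≥ N, ∀ n ≥ N, DG (u (k m)) (u (k n)) < ε) ∧
    ((∀ u : ℕ → Equiv.Perm X, (∀ n, u n ∈ G) →
        (∀ ε : ℝ≥0∞, 0 < ε → ∃ N, ∀ m ≥ N, ∀ n ≥ N, DG (u m) (u n) < ε) →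
        ∃ g ∈ G, ∀ ε : ℝ≥0∞, 0 < ε → ∃ N, ∀ n ≥ N, DG (u n) g < ε) →
      ∀ u : ℕ → Equiv.Perm X, (∀ n, u n ∈ G) →
        ∃ g ∈ G, ∃ k : ℕ → ℕ, StrictMono k ∧
          ∀ ε : ℝ≥0∞, 0 < ε → ∃ N, ∀ n ≥ N, DG (u (k n)) g < ε) := by
  have key : ∀ u : ℕ → Equiv.Perm X, (∀ n, u n ∈ G) →
      ∃ k : ℕ → ℕ, StrictMono k ∧
        ∀ ε : ℝ≥0∞, 0 < ε → ∃ N, ∀ m ≥ N, ∀ n ≥ N, DG (u (k m)) (u (k n)) < ε := by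
    intro u hu
    by_cases hΦ : Φ.Nonempty
    · -- the set Φ viewed inside `Fn X`
      set Φ' : Set (Fn X) := {f | f.app ∈ Φ} with hΦ'def
      -- sequential compactness of Φ'
      have hseq : IsSeqCompact Φ' := by
        intro x hx
        obtain ⟨ψ, hψ, k, hk, hconv⟩ := hΦcomp (fun n => (x n).app) (fun n => hx n)
        refine ⟨Fn.mk ψ, hψ, k, hk, ?_⟩
        rw [EMetric.tendsto_atTop]
        intro ε hε
        obtain ⟨N, hN⟩ := hconv ε hε
        refine ⟨N, fun n hn => ?_⟩
        have h := hN n hn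
        rw [heD] at h
        exact h
      have hK : IsCompact Φ' := hseq.isCompact
      obtain ⟨t, htsub, htc, htd⟩ := EMetric.subset_countable_closure_of_compact hK
      obtain ⟨φ₀, hφ₀⟩ := hΦ
      have hΦ'ne : Φ'.Nonempty := ⟨Fn.mk φ₀, hφ₀⟩
      have htne : t.Nonempty := by
        rcases t.eq_empty_or_nonempty with h | h
        · exfalso
          obtain ⟨f, hf⟩ := hΦ'ne
          have := htd hf
          rw [h] at this
          simp at this
        · exact h
      obtain ⟨e, he⟩ := htc.exists_eq_range htne
      have hei : ∀ i, (e i).app ∈ Φ := fun i => htsub (he ▸ Set.mem_range_self i)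
      haveI : CompactSpace {f : Fn X // f ∈ Φ'} := isCompact_iff_compactSpace.mp hK
      -- the diagonal sequence in the countable product
      let F : ℕ → (ℕ → {f : Fn X // f ∈ Φ'}) := fun n i =>
        ⟨Fn.mk fun x => (e i).app (u n x), hG (u n) (hu n) ((e i).app) (hei i)⟩
      have hsc : IsSeqCompact (Set.univ : Set (ℕ → {f : Fn X // f ∈ Φ'})) :=
        isCompact_univ.isSeqCompact
      obtain ⟨L, -, k, hk, hconv⟩ := hsc (x := F) (fun n => Set.mem_univ _)
      have hci : ∀ i, Filter.Tendsto (fun n => F (k n) i) Filter.atTop (nhds (L i)) :=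
        fun i => tendsto_pi_nhds.mp hconv i
      have hcau : ∀ i : ℕ, ∀ ε : ℝ≥0∞, 0 < ε → ∃ N, ∀ m ≥ N, ∀ n ≥ N,
          edist (F (k m) i) (F (k n) i) < ε := by
        intro i ε hε
        obtain ⟨N, hN⟩ := EMetric.tendsto_atTop.mp (hci i) (ε / 2) (ENNReal.half_pos hε.ne')
        refine ⟨N, fun m hm n hn => ?_⟩
        calc edist (F (k m) i) (F (k n) i)
            ≤ edist (F (k m) i) (L i) + edist (L i) (F (k n) i) := edist_triangle _ _ _
          _ < ε / 2 + ε / 2 := by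
              refine ENNReal.add_lt_add (hN m hm) ?_
              rw [edist_comm]; exact hN n hn
          _ = ε := ENNReal.add_halves ε
      refine ⟨k, hk, ?_⟩
      intro ε hε
      set ε₀ : ℝ≥0∞ := min ε 1 with hε₀def
      have hε₀0 : ε₀ ≠ 0 := (lt_min hε one_pos).ne'
      have hε₀top : ε₀ ≠ ⊤ := ne_top_of_le_ne_top ENNReal.one_ne_top (min_le_right _ _)
      set r : ℝ≥0∞ := ε₀ / 4 with hrdef
      have hr0 : 0 < r := ENNReal.div_pos hε₀0 (by norm_num)
      have hcover : Φ' ⊆ ⋃ i : ℕ, EMetric.ball (e i) r := by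
        intro f hf
        obtain ⟨y, hyt, hy⟩ := EMetric.mem_closure_iff.mp (htd hf) r hr0
        rw [he] at hyt
        obtain ⟨i, rfl⟩ := hyt
        exact Set.mem_iUnion.2 ⟨i, hy⟩
      obtain ⟨s, hs⟩ := hK.elim_finite_subcover (fun i => EMetric.ball (e i) r)
        (fun i => EMetric.isOpen_ball) hcover
      choose N hN using fun i => hcau i r hr0
      refine ⟨s.sup N, fun m hm n hn => ?_⟩
      rw [hDG]
      have hbound : ∀ φ ∈ Φ,
          eD (fun x => φ (u (k m) x)) (fun x => φ (u (k n) x)) ≤ r + r + r := by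
        intro φ hφ
        have hφ' : Fn.mk φ ∈ Φ' := hφ
        obtain ⟨i, his, hball⟩ := Set.mem_iUnion₂.mp (hs hφ')
        have hNi : N i ≤ s.sup N := Finset.le_sup his
        have e1 : edist (Fn.mk fun x => φ (u (k m) x))
            (Fn.mk fun x => (e i).app (u (k m) x)) < r := by
          rw [Fn.edist_comp]
          exact hball
        have e2 : edist (Fn.mk fun x => (e i).app (u (k m) x))
            (Fn.mk fun x => (e i).app (u (k n) x)) < r := by
          have h := hN i m (le_trans hNi hm) n (le_trans hNi hn)
          rw [Subtype.edist_eq] at h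
          exact h
        have e3 : edist (Fn.mk fun x => (e i).app (u (k n) x))
            (Fn.mk fun x => φ (u (k n) x)) < r := by
          rw [Fn.edist_comp, edist_comm]
          exact hball
        rw [heD]
        show edist (Fn.mk fun x => φ (u (k m) x)) (Fn.mk fun x => φ (u (k n) x)) ≤ r + r + r
        calc edist (Fn.mk fun x => φ (u (k m) x)) (Fn.mk fun x => φ (u (k n) x))
            ≤ edist (Fn.mk fun x => φ (u (k m) x)) (Fn.mk fun x => (e i).app (u (k m) x))
              + edist (Fn.mk fun x => (e i).app (u (k m) x))
                  (Fn.mk fun x => (e i).app (u (k n) x))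
              + edist (Fn.mk fun x => (e i).app (u (k n) x))
                  (Fn.mk fun x => φ (u (k n) x)) := edist_triangle4 _ _ _ _
          _ ≤ r + r + r := add_le_add (add_le_add e1.le e2.le) e3.le
      calc (⨆ φ ∈ Φ, eD (fun x => φ ((u (k m)) x)) fun x => φ ((u (k n)) x))
          ≤ r + r + r := iSup₂_le hbound
        _ < ε₀ := three_quarters_lt hε₀0 hε₀top
        _ ≤ ε := min_le_left _ _
    · refine ⟨id, strictMono_id, fun ε hε => ⟨0, fun m _ n _ => ?_⟩⟩
      rw [hDG, Set.not_nonempty_iff_eq_empty.mp hΦ]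
      simpa using hε
  refine ⟨key, fun hcompl u hu => ?_⟩
  obtain ⟨k, hk, hcau⟩ := key u hu
  obtain ⟨g, hg, hlim⟩ := hcompl (fun n => u (k n)) (fun n => hu _) hcau
  exact ⟨g, hg, k, hk, hlim⟩
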